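/- Let s > 1. Then for every y > 0 the function ψ_s is differentiable at y and ψ_s'(y) = −(1/(2(s−1))) · y · ψ_{s−1}(y). -/

import Mathlib

open MeasureTheory Real Filter Set Topology

lemma cosh_le_exp_abs (x : ℝ) : Real.cosh x ≤ Real.exp |x| := by
  rw [← Real.cosh_abs, Real.cosh_eq]
  have h1 : Real.exp (-|x|) ≤ Real.exp |x| :=
    Real.exp_le_exp.2 (by linarith [abs_nonneg x])
  linarith

lemma abs_sinh_le_exp_abs (x : ℝ) : |Real.sinh x| ≤ Real.exp |x| := by
  rw [Real.abs_sinh]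
  have h1 : Real.sinh |x| ≤ Real.cosh |x| := by
    have := Real.cosh_sub_sinh |x|
    have := Real.exp_pos (-|x|)
    linarith
  calc Real.sinh |x| ≤ Real.cosh |x| := h1
    _ ≤ Real.exp |x| := by simpa [Real.cosh_abs, abs_abs] using cosh_le_exp_abs |x|

lemma cosh_quad_le (t : ℝ) (ht : 0 ≤ t) : (1 + t + t^2/4) / 2 ≤ Real.cosh t := by
  have h1 : 1 + t/2 ≤ Real.exp (t/2) := by linarith [Real.add_one_le_exp (t/2)]
  have h2 : Real.exp (t/2) * Real.exp (t/2) = Real.exp t := by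
    rw [← Real.exp_add]; ring_nf
  have h3 : (0:ℝ) ≤ 1 + t/2 := by linarith
  have h4 : 0 ≤ Real.exp (-t) := (Real.exp_pos _).le
  rw [Real.cosh_eq]
  nlinarith [mul_le_mul h1 h1 h3 (Real.exp_pos (t/2)).le]

lemma integrable_exp_quad {b : ℝ} (hb : 0 < b) (c : ℝ) :
    Integrable fun x : ℝ => Real.exp (-b * x ^ 2 + c * x) := by
  have h := (integrable_cexp_quadratic (b := (b:ℂ)) (by simpa using hb) (c:ℂ) 0).norm
  refine h.congr (Eventually.of_forall fun x => ?_)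
  show ‖Complex.exp _‖ = _
  rw [show -(b:ℂ) * (x:ℂ)^2 + (c:ℂ)*(x:ℂ) + 0 = ((-b*x^2 + c*x : ℝ) : ℂ) by push_cast; ring,
    Complex.norm_exp, Complex.ofReal_re]

lemma integrableOn_dom {y : ℝ} (hy : 0 < y) (a : ℝ) :
    IntegrableOn (fun t => Real.exp (-(y * Real.cosh t)) * Real.exp (a * t)) (Ioi 0) := by
  have hint : Integrable fun t : ℝ => Real.exp (-(y/8) * t ^ 2 + (a - y/2) * t) :=
    integrable_exp_quad (by linarith) _
  refine Integrable.mono' hint.restrict ?_ ?_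
  · exact (((Real.continuous_exp.comp (continuous_const.mul Real.continuous_cosh).neg).mul
      (Real.continuous_exp.comp (continuous_const.mul continuous_id)))).aestronglyMeasurable
  · rw [ae_restrict_iff' measurableSet_Ioi]
    refine Eventually.of_forall fun t ht => ?_
    have ht0 : (0:ℝ) ≤ t := le_of_lt ht
    have hc := cosh_quad_le t ht0
    rw [Real.norm_eq_abs, abs_of_nonneg (by positivity), ← Real.exp_add]
    apply Real.exp_le_exp.2
    nlinarith

lemma integrableOn_of_le {y : ℝ} (hy : 0 < y) (a C : ℝ) {f : ℝ → ℝ} (hf : Continuous f)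
    (h : ∀ t ∈ Ioi (0:ℝ), |f t| ≤ C * (Real.exp (-(y * Real.cosh t)) * Real.exp (a * t))) :
    IntegrableOn f (Ioi 0) := by
  refine Integrable.mono' ((integrableOn_dom hy a).const_mul C) hf.aestronglyMeasurable.restrict ?_
  rw [ae_restrict_iff' measurableSet_Ioi]
  exact Eventually.of_forall fun t ht => by simpa [Real.norm_eq_abs] using h t ht

/-- The modified Bessel function of the second kind, for `y > 0` given by
`K_s(y) = ∫_0^∞ e^{−y·cosh t}·cosh(s·t) dt`. -/
noncomputable def besselK (s y : ℝ) : ℝ :=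
  ∫ t in Set.Ioi (0 : ℝ), Real.exp (-(y * Real.cosh t)) * Real.cosh (s * t)

lemma exp_mul_exp_abs (s t : ℝ) (ht : 0 ≤ t) :
    Real.exp t * Real.exp (|s| * t) = Real.exp ((|s| + 1) * t) := by
  rw [← Real.exp_add]; ring_nf

lemma cosh_mul_le (s t : ℝ) (ht : 0 ≤ t) : Real.cosh (s * t) ≤ Real.exp (|s| * t) := by
  have := cosh_le_exp_abs (s * t)
  rwa [abs_mul, abs_of_nonneg ht] at this

lemma abs_sinh_mul_le (s t : ℝ) (ht : 0 ≤ t) : |Real.sinh (s * t)| ≤ Real.exp (|s| * t) := by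
  have := abs_sinh_le_exp_abs (s * t)
  rwa [abs_mul, abs_of_nonneg ht] at this

lemma besselK_integrable (s : ℝ) {y : ℝ} (hy : 0 < y) :
    IntegrableOn (fun t => Real.exp (-(y * Real.cosh t)) * Real.cosh (s * t)) (Ioi 0) := by
  refine integrableOn_of_le hy (|s| + 1) 1 (by continuity) fun t ht => ?_
  have ht0 : (0:ℝ) ≤ t := le_of_lt ht
  have h1 : Real.cosh (s * t) ≤ Real.exp ((|s| + 1) * t) := by
    refine (cosh_mul_le s t ht0).trans (Real.exp_le_exp.2 ?_)
    nlinarith [abs_nonneg s]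
  have h2 : (0:ℝ) < Real.exp (-(y * Real.cosh t)) := Real.exp_pos _
  rw [abs_mul, abs_of_pos h2, abs_of_pos (Real.cosh_pos _), one_mul]
  exact mul_le_mul_of_nonneg_left h1 h2.le

lemma besselK_hasDerivAt (s : ℝ) {y : ℝ} (hy : 0 < y) :
    HasDerivAt (besselK s)
      (-∫ t in Ioi (0:ℝ), Real.exp (-(y * Real.cosh t)) * Real.cosh t * Real.cosh (s * t)) y := by
  have key := hasDerivAt_integral_of_dominated_loc_of_deriv_le
    (μ := volume.restrict (Ioi (0:ℝ)))
    (F := fun x t => Real.exp (-(x * Real.cosh t)) * Real.cosh (s * t))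
    (F' := fun x t => (Real.exp (-(x * Real.cosh t)) * -Real.cosh t) * Real.cosh (s * t))
    (x₀ := y)
    (bound := fun t => Real.exp (-(y/2 * Real.cosh t)) * Real.exp ((|s| + 1) * t))
    (Metric.ball_mem_nhds y (half_pos hy))
    (Eventually.of_forall fun x => (by continuity : Continuous fun t =>
      Real.exp (-(x * Real.cosh t)) * Real.cosh (s * t)).aestronglyMeasurable.restrict)
    (besselK_integrable s hy)
    ((by continuity : Continuous fun t =>
      (Real.exp (-(y * Real.cosh t)) * -Real.cosh t) * Real.cosh (s * t)).aestronglyMeasurable.restrict)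
    ?_ (integrableOn_dom (half_pos hy) (|s| + 1)) ?_
  · have h2 := key.2
    have hre : (∫ t in Ioi (0:ℝ), (Real.exp (-(y * Real.cosh t)) * -Real.cosh t) * Real.cosh (s * t))
        = -∫ t in Ioi (0:ℝ), Real.exp (-(y * Real.cosh t)) * Real.cosh t * Real.cosh (s * t) := by
      rw [← integral_neg]
      exact integral_congr_ae (Eventually.of_forall fun t => by ring)
    rw [hre] at h2
    exact h2
  · rw [ae_restrict_iff' measurableSet_Ioi]
    refine Eventually.of_forall fun t ht x hx => ?_
    have ht0 : (0:ℝ) ≤ t := le_of_lt ht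
    have hx2 : y/2 ≤ x := by
      have := abs_lt.1 (mem_ball_iff_norm.1 hx)
      linarith [this.1]
    have hb1 : Real.exp (-(x * Real.cosh t)) ≤ Real.exp (-(y/2 * Real.cosh t)) :=
      Real.exp_le_exp.2 (by nlinarith [Real.cosh_pos (x := t)])
    have hb2 : Real.cosh t ≤ Real.exp t := by
      simpa [abs_of_nonneg ht0] using cosh_le_exp_abs t
    have hb3 := cosh_mul_le s t ht0
    show ‖Real.exp (-(x * Real.cosh t)) * -Real.cosh t * Real.cosh (s * t)‖
      ≤ Real.exp (-(y/2 * Real.cosh t)) * Real.exp ((|s| + 1) * t)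
    rw [Real.norm_eq_abs, abs_mul, abs_mul, abs_of_pos (Real.exp_pos _), abs_neg,
      abs_of_pos (Real.cosh_pos _), abs_of_pos (Real.cosh_pos _), ← exp_mul_exp_abs s t ht0]
    calc Real.exp (-(x * Real.cosh t)) * Real.cosh t * Real.cosh (s * t)
        ≤ Real.exp (-(y/2 * Real.cosh t)) * Real.exp t * Real.exp (|s| * t) := by
          refine mul_le_mul (mul_le_mul hb1 hb2 (Real.cosh_pos _).le (Real.exp_pos _).le) hb3
            (Real.cosh_pos _).le (by positivity)
      _ = Real.exp (-(y/2 * Real.cosh t)) * (Real.exp t * Real.exp (|s| * t)) := by ring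
  · refine Eventually.of_forall fun t x _ => ?_
    have := (((hasDerivAt_id x).mul_const (Real.cosh t)).neg.exp).mul_const (Real.cosh (s * t))
    simpa using this

lemma key_identity (s : ℝ) {y : ℝ} (hy : 0 < y) :
    ∫ t in Ioi (0:ℝ), Real.exp (-(y * Real.cosh t)) *
      (s * Real.cosh (s * t) - y * (Real.sinh t * Real.sinh (s * t))) = 0 := by
  have hderiv : ∀ t ∈ Ici (0:ℝ),
      HasDerivAt (fun t => Real.exp (-(y * Real.cosh t)) * Real.sinh (s * t))
        (Real.exp (-(y * Real.cosh t)) *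
          (s * Real.cosh (s * t) - y * (Real.sinh t * Real.sinh (s * t)))) t := by
    intro t _
    have h1 : HasDerivAt (fun t => Real.exp (-(y * Real.cosh t)))
        (Real.exp (-(y * Real.cosh t)) * -(y * Real.sinh t)) t :=
      (((Real.hasDerivAt_cosh t).const_mul y).neg).exp
    have h2 : HasDerivAt (fun t => Real.sinh (s * t)) (Real.cosh (s * t) * s) t := by
      simpa [Function.comp_def] using (Real.hasDerivAt_sinh (s * t)).comp t ((hasDerivAt_id t).const_mul s)
    exact (h1.mul h2).congr_deriv (by ring)
  have hint : IntegrableOn (fun t => Real.exp (-(y * Real.cosh t)) *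
      (s * Real.cosh (s * t) - y * (Real.sinh t * Real.sinh (s * t)))) (Ioi 0) := by
    refine integrableOn_of_le hy (|s| + 1) (|s| + y) (by continuity) fun t ht => ?_
    have ht0 : (0:ℝ) ≤ t := le_of_lt ht
    have hb1 := cosh_mul_le s t ht0
    have hb2 : |Real.sinh t| ≤ Real.exp t := by
      simpa [abs_of_nonneg ht0] using abs_sinh_le_exp_abs t
    have hb3 := abs_sinh_mul_le s t ht0
    have hb4 : Real.exp (|s| * t) ≤ Real.exp ((|s| + 1) * t) :=
      Real.exp_le_exp.2 (by nlinarith [abs_nonneg s])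
    have hb5 := exp_mul_exp_abs s t ht0
    have hmain : |s * Real.cosh (s * t) - y * (Real.sinh t * Real.sinh (s * t))|
        ≤ (|s| + y) * Real.exp ((|s| + 1) * t) := by
      have e1 : |s * Real.cosh (s * t)| ≤ |s| * Real.exp ((|s| + 1) * t) := by
        rw [abs_mul, abs_of_pos (Real.cosh_pos _)]
        exact mul_le_mul_of_nonneg_left (hb1.trans hb4) (abs_nonneg s)
      have e2 : |y * (Real.sinh t * Real.sinh (s * t))| ≤ y * Real.exp ((|s| + 1) * t) := by
        rw [abs_mul, abs_of_pos hy, abs_mul]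
        refine mul_le_mul_of_nonneg_left ?_ hy.le
        calc |Real.sinh t| * |Real.sinh (s * t)| ≤ Real.exp t * Real.exp (|s| * t) :=
              mul_le_mul hb2 hb3 (abs_nonneg _) (Real.exp_pos _).le
          _ = Real.exp ((|s| + 1) * t) := hb5
      calc |s * Real.cosh (s * t) - y * (Real.sinh t * Real.sinh (s * t))|
          ≤ |s * Real.cosh (s * t)| + |y * (Real.sinh t * Real.sinh (s * t))| := abs_sub _ _
        _ ≤ (|s| + y) * Real.exp ((|s| + 1) * t) := by linarith [e1, e2]
    rw [abs_mul, abs_of_pos (Real.exp_pos _)]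
    calc Real.exp (-(y * Real.cosh t)) * |s * Real.cosh (s*t) - y * (Real.sinh t * Real.sinh (s*t))|
        ≤ Real.exp (-(y * Real.cosh t)) * ((|s| + y) * Real.exp ((|s| + 1) * t)) :=
          mul_le_mul_of_nonneg_left hmain (Real.exp_pos _).le
      _ = (|s| + y) * (Real.exp (-(y * Real.cosh t)) * Real.exp ((|s| + 1) * t)) := by ring
  have htend : Tendsto (fun t => Real.exp (-(y * Real.cosh t)) * Real.sinh (s * t)) atTop (𝓝 0) := by
    have hbot : Tendsto (fun t : ℝ => -(y/8) * t ^ 2 + (|s| - y/2) * t) atTop atBot := by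
      have h1 : Tendsto (fun t : ℝ => t * (-(y/8) * t + (|s| - y/2))) atTop atBot := by
        refine tendsto_id.atTop_mul_atBot₀ ?_
        exact tendsto_atBot_add_const_right _ _
          ((tendsto_const_mul_atBot_of_neg (by linarith)).2 tendsto_id)
      exact h1.congr fun t => by ring
    have hh : Tendsto (fun t : ℝ => Real.exp (-(y/8) * t ^ 2 + (|s| - y/2) * t)) atTop (𝓝 0) :=
      Real.tendsto_exp_atBot.comp hbot
    refine squeeze_zero_norm' ?_ hh
    filter_upwards [eventually_ge_atTop (0:ℝ)] with t ht0
    have hc := cosh_quad_le t ht0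
    have hb3 := abs_sinh_mul_le s t ht0
    rw [Real.norm_eq_abs, abs_mul, abs_of_pos (Real.exp_pos _)]
    calc Real.exp (-(y * Real.cosh t)) * |Real.sinh (s * t)|
        ≤ Real.exp (-(y * Real.cosh t)) * Real.exp (|s| * t) :=
          mul_le_mul_of_nonneg_left hb3 (Real.exp_pos _).le
      _ = Real.exp (-(y * Real.cosh t) + |s| * t) := by rw [← Real.exp_add]
      _ ≤ Real.exp (-(y/8) * t ^ 2 + (|s| - y/2) * t) := Real.exp_le_exp.2 (by nlinarith)
  have := integral_Ioi_of_hasDerivAt_of_tendsto' hderiv hint htend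
  simpa using this

lemma besselK_integrable' (s : ℝ) {y : ℝ} (hy : 0 < y) :
    IntegrableOn (fun t => Real.exp (-(y * Real.cosh t)) * Real.cosh t * Real.cosh (s * t))
      (Ioi 0) := by
  refine integrableOn_of_le hy (|s| + 1) 1 (by continuity) fun t ht => ?_
  have ht0 : (0:ℝ) ≤ t := le_of_lt ht
  have hb2 : Real.cosh t ≤ Real.exp t := by
    simpa [abs_of_nonneg ht0] using cosh_le_exp_abs t
  have hb3 := cosh_mul_le s t ht0
  rw [abs_mul, abs_mul, abs_of_pos (Real.exp_pos _), abs_of_pos (Real.cosh_pos _),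
    abs_of_pos (Real.cosh_pos _), one_mul, ← exp_mul_exp_abs s t ht0]
  calc Real.exp (-(y * Real.cosh t)) * Real.cosh t * Real.cosh (s * t)
      ≤ Real.exp (-(y * Real.cosh t)) * Real.exp t * Real.exp (|s| * t) :=
        mul_le_mul (mul_le_mul_of_nonneg_left hb2 (Real.exp_pos _).le) hb3
          (Real.cosh_pos _).le (by positivity)
    _ = Real.exp (-(y * Real.cosh t)) * (Real.exp t * Real.exp (|s| * t)) := by ring

/-- `ψ_s(y) = (2^{1−s}/Γ(s))·|y|^s·K_s(|y|)` for `y ≠ 0`, and `ψ_s(0) = 1`. -/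
noncomputable def psi (s : ℝ) (y : ℝ) : ℝ :=
  if y = 0 then 1
  else (2 : ℝ) ^ (1 - s) / Real.Gamma s * |y| ^ s * besselK s |y|

/-- for `s > 1`, for every `y > 0` `ψ_s` is differentiable at `y` with
`ψ_s'(y) = −(1/(2(s−1)))·y·ψ_{s−1}(y)`. -/
theorem psi_hasDerivAt_of_one_lt (s : ℝ) (hs : 1 < s) :
    ∀ y : ℝ, 0 < y →
      HasDerivAt (psi s) (-(1 / (2 * (s - 1)) * y * psi (s - 1) y)) y := by
  intro y hy
  have hs1 : s - 1 ≠ 0 := by linarith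
  have hGpos : 0 < Real.Gamma (s - 1) := Real.Gamma_pos_of_pos (by linarith)
  set A : ℝ := besselK s y with hA
  set B : ℝ := ∫ t in Ioi (0:ℝ),
    Real.exp (-(y * Real.cosh t)) * Real.cosh t * Real.cosh (s * t) with hB
  set C : ℝ := besselK (s - 1) y with hC
  -- derivative of the smooth representative
  have hK : HasDerivAt (besselK s) (-B) y := besselK_hasDerivAt s hy
  have hpow : HasDerivAt (fun x : ℝ => x ^ s) (s * y ^ (s - 1)) y :=
    Real.hasDerivAt_rpow_const (Or.inl hy.ne')
  have hmul := (hpow.mul hK).const_mul ((2 : ℝ) ^ (1 - s) / Real.Gamma s)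
  -- psi s agrees with the representative near y
  have heq : psi s =ᶠ[𝓝 y] fun x : ℝ =>
      (2 : ℝ) ^ (1 - s) / Real.Gamma s * (x ^ s * besselK s x) := by
    filter_upwards [Ioi_mem_nhds hy] with x hx
    have hx0 : (0:ℝ) < x := hx
    rw [psi, if_neg hx0.ne', abs_of_pos hx0]
    ring
  have hd := hmul.congr_of_eventuallyEq heq
  -- the Bessel recurrence from the key identity
  have iA := besselK_integrable s hy
  have iB := besselK_integrable' s hy
  have iC := besselK_integrable (s - 1) hy
  have hBval : y * B = s * A + y * C := by
    have h0 := key_identity s hy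
    have hre : ∫ t in Ioi (0:ℝ), Real.exp (-(y * Real.cosh t)) *
        (s * Real.cosh (s * t) - y * (Real.sinh t * Real.sinh (s * t)))
        = ∫ t in Ioi (0:ℝ), (s * (Real.exp (-(y * Real.cosh t)) * Real.cosh (s * t)) -
            (y * (Real.exp (-(y * Real.cosh t)) * Real.cosh t * Real.cosh (s * t)) -
             y * (Real.exp (-(y * Real.cosh t)) * Real.cosh ((s - 1) * t)))) := by
      refine integral_congr_ae (Eventually.of_forall fun t => ?_)
      have hcsub : Real.cosh ((s - 1) * t) = Real.cosh (s * t) * Real.cosh t -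
          Real.sinh (s * t) * Real.sinh t := by
        rw [show (s - 1) * t = s * t - t by ring, Real.cosh_sub]
      simp only [hcsub]
      ring
    have hsA : Integrable (fun t => s * (Real.exp (-(y * Real.cosh t)) * Real.cosh (s * t)))
        (volume.restrict (Ioi 0)) := iA.const_mul s
    have hyB : Integrable
        (fun t => y * (Real.exp (-(y * Real.cosh t)) * Real.cosh t * Real.cosh (s * t)))
        (volume.restrict (Ioi 0)) := iB.const_mul y
    have hyC : Integrable
        (fun t => y * (Real.exp (-(y * Real.cosh t)) * Real.cosh ((s - 1) * t)))
        (volume.restrict (Ioi 0)) := iC.const_mul y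
    have hBC : Integrable (fun t =>
        y * (Real.exp (-(y * Real.cosh t)) * Real.cosh t * Real.cosh (s * t)) -
        y * (Real.exp (-(y * Real.cosh t)) * Real.cosh ((s - 1) * t)))
        (volume.restrict (Ioi 0)) := hyB.sub hyC
    rw [hre, integral_sub hsA hBC, integral_sub hyB hyC,
      integral_const_mul, integral_const_mul, integral_const_mul] at h0
    rw [hA, hB, hC, besselK, besselK]
    linarith [h0]
  -- identify the derivative value
  have hys : y ^ s = y ^ (s - 1) * y := by
    have := Real.rpow_add hy (s - 1) 1
    rw [sub_add_cancel, Real.rpow_one] at this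
    exact this
  have hstep : s * y ^ (s - 1) * A + y ^ s * -B = -(y ^ (s - 1) * (y * C)) := by
    rw [hys]
    linear_combination (-(y ^ (s - 1))) * hBval
  have hval : (2 : ℝ) ^ (1 - s) / Real.Gamma s * (s * y ^ (s - 1) * A + y ^ s * -B)
      = -(1 / (2 * (s - 1)) * y * psi (s - 1) y) := by
    rw [hstep, psi, if_neg hy.ne', abs_of_pos hy]
    have hG : Real.Gamma s = (s - 1) * Real.Gamma (s - 1) := by
      have := Real.Gamma_add_one hs1
      rw [sub_add_cancel] at this
      exact this
    have h2 : (2 : ℝ) ^ (1 - (s - 1)) = 2 * (2 : ℝ) ^ (1 - s) := by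
      rw [show (1 - (s - 1)) = (1 - s) + 1 by ring, Real.rpow_add (by norm_num : (0:ℝ) < 2),
        Real.rpow_one]
      ring
    rw [hG, h2, ← hC]
    have h2ne : (2:ℝ) ^ (1 - s) ≠ 0 := by positivity
    field_simp
  rw [← hval]
  exact hd
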